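/- Let B ⊆ ℕ^↑ be a 𝔟-scale and let X = B ∪ Q carry the subspace topology from Inc. Then there exists a lower semicontinuous multivalued map Φ : X ⇒ Fr, with each Φ(x) a nonempty clopen subset of Fr, such that: (i) Φ(x) = Fr for every x ∈ B; and (ii) for every Y ⊆ X with Q ⊆ Y and every continuous φ : Y → Fr (Y with the subspace topology) satisfying φ(y) ∈ Φ(y) for all y ∈ Y, one has |Y| < |X| = 𝔟. -/

import Mathlib

open Set Filter Topology

attribute [local instance] Classical.propDecidable

/-- The Cantor space `{0,1}^ℕ`, representing the power set `P(ℕ)`. -/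
abbrev PN : Type := ℕ → Bool

/-- The Fréchet filter: the set of all cofinite subsets of ℕ, as a subspace of `P(ℕ)`. -/
def Fr : Set PN := {A : PN | {n : ℕ | A n = false}.Finite}

/-- Lower semicontinuity of a multivalued map `Φ : X ⇒ Y`. -/
def LSC {X Y : Type*} [TopologicalSpace X] [TopologicalSpace Y] (Φ : X → Set Y) : Prop :=
  ∀ V : Set Y, IsOpen V → IsOpen {x : X | (Φ x ∩ V).Nonempty}

/-- The unbounding number 𝔟: the least cardinality of a `≤*`-unbounded subset of `ℕ^ℕ`. -/
noncomputable def bCard : Cardinal :=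
  sInf {c : Cardinal | ∃ S : Set (ℕ → ℕ), Cardinal.mk ↥S = c ∧
    ∀ g : ℕ → ℕ, ∃ f ∈ S, ¬ ∀ᶠ n in atTop, f n ≤ g n}

/-- A 𝔟-scale: a `≤*`-increasing, `≤*`-unbounded family of strictly increasing functions,
enumerated injectively by the ordinals below 𝔟. -/
structure IsBScale (b : {o : Ordinal // o < bCard.ord} → (ℕ → ℕ)) : Prop where
  strictMono : ∀ α, StrictMono (b α)
  inj : Function.Injective b
  mono : ∀ α β : {o : Ordinal // o < bCard.ord}, α < β → ∀ᶠ n in atTop, b α n ≤ b β n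
  unbounded : ∀ g : ℕ → ℕ, ∃ α, ¬ ∀ᶠ n in atTop, b α n ≤ g n

/-- The set `Inc` of nondecreasing elements of `(ℕ∞)^ℕ`. -/
def Inc : Set (ℕ → ℕ∞) := {x : ℕ → ℕ∞ | Monotone x}

/-- The set `Q` of eventually infinite elements of `Inc`. -/
def Qset : Set (ℕ → ℕ∞) := {x : ℕ → ℕ∞ | Monotone x ∧ ∀ᶠ n in atTop, x n = ⊤}

/-- The inclusion of `ℕ^ℕ` into `(ℕ∞)^ℕ`. -/
def toInc (f : ℕ → ℕ) : ℕ → ℕ∞ := fun n => (f n : ℕ∞)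

/-! ### Auxiliary definitions -/

/-- The last finite value of an eventually-infinite monotone sequence. -/
noncomputable def lastFin (y : ℕ → ℕ∞) : ℕ :=
  if h : ∃ k, y k = ⊤ then (y (Nat.find h - 1)).toNat else 0

/-- The element of `Q` with finite prefix `v`. -/
noncomputable def qv (k : ℕ) (v : Fin k → ℕ) : ℕ → ℕ∞ :=
  fun n => if h : n < k then (v ⟨n, h⟩ : ℕ∞) else ⊤

/-! ### Basic lemmas -/

lemma toInc_inj : Function.Injective toInc := by
  intro f g h
  funext n
  have := congrFun h n
  simpa [toInc] using this

lemma toInc_not_mem_Qset (f : ℕ → ℕ) : toInc f ∉ Qset := by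
  intro ⟨_, h⟩
  rcases h.exists with ⟨n, hn⟩
  simp [toInc] at hn

lemma qv_mem_Qset {k : ℕ} {v : Fin k → ℕ} (hv : ∀ i j : Fin k, i ≤ j → v i ≤ v j) :
    qv k v ∈ Qset := by
  constructor
  · intro i j hij
    by_cases hj : j < k
    · have hi : i < k := lt_of_le_of_lt hij hj
      simp only [qv, dif_pos hi, dif_pos hj]
      exact_mod_cast hv ⟨i, hi⟩ ⟨j, hj⟩ hij
    · simp [qv, dif_neg hj]
  · filter_upwards [eventually_ge_atTop k] with n hn
    simp [qv, Nat.not_lt.mpr hn]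

lemma lastFin_qv {k : ℕ} (hk : 0 < k) (v : Fin k → ℕ) :
    lastFin (qv k v) = v ⟨k - 1, Nat.sub_lt hk one_pos⟩ := by
  have hex : ∃ j, qv k v j = ⊤ := ⟨k, by simp [qv]⟩
  have hfind : Nat.find hex = k := by
    rw [Nat.find_eq_iff]
    constructor
    · simp [qv]
    · intro j hj
      simp [qv, hj]
  rw [lastFin, dif_pos hex, hfind]
  have h1 : k - 1 < k := Nat.sub_lt hk one_pos
  simp [qv, h1]

lemma lastFin_ge {y : ℕ → ℕ∞} (hy : y ∈ Qset) {j : ℕ} {m : ℕ} (hj : y j = (m : ℕ∞)) :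
    m ≤ lastFin y := by
  obtain ⟨hmono, hev⟩ := hy
  have hex : ∃ k, y k = ⊤ := hev.exists
  set k₁ := Nat.find hex with hk₁
  have hjlt : j < k₁ := by
    by_contra hle
    push_neg at hle
    have := hmono hle
    rw [Nat.find_spec hex] at this
    rw [top_le_iff] at this
    rw [this] at hj
    exact (ENat.top_ne_coe m) hj
  have h1 : k₁ - 1 < k₁ := Nat.sub_lt (by omega) one_pos
  have hne : y (k₁ - 1) ≠ ⊤ := Nat.find_min hex h1
  have hle : y j ≤ y (k₁ - 1) := hmono (by omega)
  rw [lastFin, dif_pos hex, ← hk₁]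
  lift y (k₁ - 1) to ℕ using hne with mm hmm
  rw [hj] at hle
  have : m ≤ mm := by exact_mod_cast hle
  simpa using this

/-! ### Cardinal lemmas -/

lemma flip_lemma {W : Set (ℕ → Bool)} (hW : IsOpen W) {A₀ : ℕ → Bool} (hA₀Fr : A₀ ∈ Fr)
    (hA₀W : A₀ ∈ W) : ∃ c : ℕ, ∀ p, c ≤ p → ∃ A ∈ Fr, A ∈ W ∧ A p = false := by
  rw [isOpen_pi_iff] at hW
  obtain ⟨I, u, hu, hsub⟩ := hW A₀ hA₀W
  refine ⟨(I.sup id) + 1, fun p hp => ?_⟩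
  have hpI : p ∉ I := fun hmem => by
    have : id p ≤ I.sup id := Finset.le_sup (f := id) hmem
    simp only [id] at this
    omega
  refine ⟨Function.update A₀ p false, ?_, ?_, ?_⟩
  · have : {n | Function.update A₀ p false n = false} ⊆ insert p {n | A₀ n = false} := by
      intro n hn
      by_cases hnp : n = p
      · exact Or.inl hnp
      · right
        simpa [Function.update, hnp] using hn
    exact Set.Finite.subset (Set.Finite.insert p hA₀Fr) this
  · apply hsub
    intro i hi
    have hip : i ≠ p := fun h => hpI (h ▸ hi)
    simpa [Function.update, hip] using (hu i hi).2
  · simp [Function.update]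

lemma Fr_tail {A : ℕ → Bool} (hA : A ∈ Fr) : ∃ m, ∀ p, m ≤ p → A p = true := by
  obtain ⟨m, hm⟩ := (Set.Finite.bddAbove hA)
  refine ⟨m + 1, fun p hp => ?_⟩
  by_contra h
  have : A p = false := by
    cases hAp : A p
    · rfl
    · exact absurd hAp h
  have := hm this
  omega

lemma countable_Qset : Countable ↥Qset := by
  have hinj : Function.Injective (fun q : ↥Qset =>
      (List.range (Nat.find q.2.2.exists)).map (fun i => (q.1 i).toNat)) := by
    intro q q' h
    simp only at h
    have hlen := congrArg List.length h
    simp only [List.length_map, List.length_range] at hlen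
    set k := Nat.find q.2.2.exists with hk
    ext n
    by_cases hn : n < k
    · have e1 : q.1 n ≠ ⊤ := Nat.find_min q.2.2.exists hn
      have e2 : q'.1 n ≠ ⊤ := by
        have hn2 : n < Nat.find q'.2.2.exists := by rw [← hlen]; exact hn
        exact Nat.find_min q'.2.2.exists hn2
      have hg : (q.1 n).toNat = (q'.1 n).toNat := by
        have h1 := congrArg (fun l => l.getD n 0) h
        simp only [List.getD_eq_getElem?_getD] at h1
        rw [List.getElem?_map, List.getElem?_map, List.getElem?_range hn,
          List.getElem?_range (by rw [← hlen]; exact hn)] at h1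
        simpa using h1
      lift q.1 n to ℕ using e1 with a
      lift q'.1 n to ℕ using e2 with a'
      simp only [ENat.toNat_coe] at hg
      rw [hg]
    · push_neg at hn
      have e1 : q.1 n = ⊤ := by
        have := q.2.1 hn
        rw [Nat.find_spec q.2.2.exists] at this
        exact top_le_iff.mp this
      have e2 : q'.1 n = ⊤ := by
        have h3 := q'.2.1 (show Nat.find q'.2.2.exists ≤ n by rw [← hlen]; exact hn)
        rw [Nat.find_spec q'.2.2.exists] at h3
        exact top_le_iff.mp h3
      rw [e1, e2]
  exact Function.Injective.countable hinj

lemma bCard_spec : ∃ S : Set (ℕ → ℕ), Cardinal.mk ↥S = bCard ∧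
    ∀ g : ℕ → ℕ, ∃ f ∈ S, ¬ ∀ᶠ n in atTop, f n ≤ g n := by
  have hne : {c : Cardinal | ∃ S : Set (ℕ → ℕ), Cardinal.mk ↥S = c ∧
      ∀ g : ℕ → ℕ, ∃ f ∈ S, ¬ ∀ᶠ n in atTop, f n ≤ g n}.Nonempty := by
    refine ⟨Cardinal.mk ↥(Set.univ : Set (ℕ → ℕ)), Set.univ, rfl, fun g => ?_⟩
    refine ⟨fun n => g n + 1, trivial, ?_⟩
    intro h
    rcases h.exists with ⟨n, hn⟩
    simp at hn
  exact csInf_mem hne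

lemma unbounded_uncountable {S : Set (ℕ → ℕ)}
    (hS : ∀ g : ℕ → ℕ, ∃ f ∈ S, ¬ ∀ᶠ n in atTop, f n ≤ g n) : ¬ S.Countable := by
  intro hc
  rcases Set.eq_empty_or_nonempty S with rfl | hne
  · rcases hS 0 with ⟨f, hf, _⟩; exact hf
  · obtain ⟨e, he⟩ := hc.exists_surjective hne
    set g : ℕ → ℕ := fun n => Finset.sup (Finset.range (n+1)) (fun i => (e i).1 n) with hg
    obtain ⟨f, hfS, hf⟩ := hS g
    apply hf
    obtain ⟨i, hi⟩ : ∃ i, (e i).1 = f := by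
      obtain ⟨i, hi⟩ := he ⟨f, hfS⟩
      exact ⟨i, by rw [hi]⟩
    filter_upwards [eventually_ge_atTop i] with n hn
    calc f n = (e i).1 n := by rw [hi]
    _ ≤ g n := Finset.le_sup (f := fun j => (e j).1 n)
        (Finset.mem_range.mpr (show i < n + 1 by omega))

lemma aleph0_lt_bCard : Cardinal.aleph0 < bCard := by
  obtain ⟨S, hmk, hS⟩ := bCard_spec
  rw [← hmk]
  rcases lt_or_ge Cardinal.aleph0 (Cardinal.mk ↥S) with h | h
  · exact h
  · exact absurd ((Cardinal.mk_le_aleph0_iff.mp h)) (by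
      intro hc
      exact unbounded_uncountable hS (Set.countable_coe_iff.mp hc))

lemma card_B (b : {o : Ordinal // o < bCard.ord} → (ℕ → ℕ)) (hbinj : Function.Injective b) :
    Cardinal.mk ↥(toInc '' Set.range b) = bCard := by
  have h1 : toInc '' Set.range b = Set.range (toInc ∘ b) := by
    rw [Set.range_comp]
  rw [h1]
  have hinj : Function.Injective (toInc ∘ b) := toInc_inj.comp hbinj
  have h2 := Cardinal.mk_range_eq_of_injective hinj
  have h3 : Cardinal.mk ↥(Set.Iio bCard.ord) = Cardinal.lift.{1} (bCard.ord).card :=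
    Ordinal.mk_Iio_ordinal bCard.ord
  rw [Cardinal.card_ord] at h3
  have h4 : Cardinal.mk {o : Ordinal // o < bCard.ord} = Cardinal.lift.{1} bCard := h3
  rw [h4] at h2
  simp only [Cardinal.lift_lift, Cardinal.lift_id] at h2
  exact Cardinal.lift_injective h2

lemma card_X (b : {o : Ordinal // o < bCard.ord} → (ℕ → ℕ)) (hbinj : Function.Injective b)
    (X : Set (ℕ → ℕ∞)) (hX : X = toInc '' Set.range b ∪ Qset) :
    Cardinal.mk ↥X = bCard := by
  have hB := card_B b hbinj
  apply le_antisymm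
  · rw [hX]
    calc Cardinal.mk ↥(toInc '' Set.range b ∪ Qset)
        ≤ Cardinal.mk ↥(toInc '' Set.range b) + Cardinal.mk ↥Qset := Cardinal.mk_union_le _ _
    _ ≤ bCard + Cardinal.aleph0 := by
        apply add_le_add
        · exact le_of_eq hB
        · exact @Cardinal.mk_le_aleph0 _ countable_Qset
    _ = bCard := Cardinal.add_eq_left (le_of_lt aleph0_lt_bCard) (le_of_lt aleph0_lt_bCard)
  · rw [← hB]
    apply Cardinal.mk_le_mk_of_subset
    rw [hX]
    exact Set.subset_union_left

/-! ### Topological extraction lemmas -/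

lemma enat_nhds_top {s : Set ℕ∞} (hs : s ∈ 𝓝 (⊤ : ℕ∞)) : ∃ r : ℕ, Set.Ioi (r : ℕ∞) ⊆ s := by
  rw [nhds_top_basis.mem_iff] at hs
  obtain ⟨a, ha, hsub⟩ := hs
  lift a to ℕ using ha.ne
  exact ⟨a, hsub⟩

lemma nhds_extraction {q : ℕ → ℕ∞} {k : ℕ}
    (htop : ∀ n, k ≤ n → q n = ⊤) {t : Set (ℕ → ℕ∞)} (ht : t ∈ 𝓝 q) :
    ∃ r L : ℕ, ∀ z : ℕ → ℕ∞, (∀ n, n < k → z n = q n) →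
      (∀ n, k ≤ n → n < L → (r : ℕ∞) < z n) → z ∈ t := by
  rw [nhds_pi, Filter.mem_pi] at ht
  obtain ⟨I, hIfin, s, hs, hsub⟩ := ht
  obtain ⟨N, hN⟩ := hIfin.bddAbove
  set ρ : ℕ → ℕ := fun i => if h : ∃ r : ℕ, Set.Ioi (r : ℕ∞) ⊆ s i then h.choose else 0 with hρ
  refine ⟨Finset.sup hIfin.toFinset ρ, N + 1, fun z hpre htail => ?_⟩
  apply hsub
  intro i hi
  by_cases hik : i < k
  · rw [hpre i hik]
    exact mem_of_mem_nhds (hs i)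
  · push_neg at hik
    have hqi : q i = ⊤ := htop i hik
    have hex : ∃ r : ℕ, Set.Ioi (r : ℕ∞) ⊆ s i := enat_nhds_top (by rw [← hqi]; exact hs i)
    have hsubi : Set.Ioi ((ρ i : ℕ) : ℕ∞) ⊆ s i := by
      rw [hρ]; simp only [dif_pos hex]; exact hex.choose_spec
    apply hsubi
    have hiN : i ≤ N := hN hi
    have h2 := htail i hik (by omega)
    have h3 : ((ρ i : ℕ) : ℕ∞) ≤ ((Finset.sup hIfin.toFinset ρ : ℕ) : ℕ∞) :=
      Nat.cast_le.mpr (Finset.le_sup (f := ρ) (hIfin.mem_toFinset.mpr hi))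
    exact lt_of_le_of_lt h3 h2

/-- Theorem: for `X = B ∪ Q`, `B` a 𝔟-scale, there is a clopen-valued lsc
`Φ : X ⇒ Fr` with `Φ(x) = Fr` for all `x ∈ B`, and such that every continuous partial
selection of `Φ` defined on a subset `Y ⊇ Q` of `X` satisfies `|Y| < |X| = 𝔟`. -/
theorem exists_lsc_without_large_partial_selections
    (b : {o : Ordinal // o < bCard.ord} → (ℕ → ℕ)) (hb : IsBScale b)
    (X : Set (ℕ → ℕ∞)) (hX : X = toInc '' Set.range b ∪ Qset) :
    Cardinal.mk ↥X = bCard ∧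
    ∃ Φ : ↥X → Set ↥Fr, LSC Φ ∧ (∀ x, IsClopen (Φ x) ∧ (Φ x).Nonempty) ∧
      (∀ x : ↥X, (x : ℕ → ℕ∞) ∈ toInc '' Set.range b → Φ x = Set.univ) ∧
      (∀ Y : Set ↥X, (∀ x : ↥X, (x : ℕ → ℕ∞) ∈ Qset → x ∈ Y) →
        ∀ φ : ↥Y → ↥Fr, Continuous φ → (∀ y : ↥Y, φ y ∈ Φ (y : ↥X)) →
          Cardinal.mk ↥Y < Cardinal.mk ↥X) := by
  have part1 : Cardinal.mk ↥X = bCard := card_X b hb.inj X hX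
  set Bt : Set (ℕ → ℕ∞) := toInc '' Set.range b with hBt
  set Φ : ↥X → Set ↥Fr := fun x =>
    if (x : ℕ → ℕ∞) ∈ Bt then Set.univ
    else {A : ↥Fr | (A : PN) (lastFin (x : ℕ → ℕ∞)) = false} with hΦ
  -- points of X are in Bt or Qset
  have hXmem : ∀ x : ↥X, (x : ℕ → ℕ∞) ∈ Bt ∨ (x : ℕ → ℕ∞) ∈ Qset := by
    rintro ⟨xv, hxv⟩
    rw [hX] at hxv
    exact hxv
  have hΦQ : ∀ x : ↥X, (x : ℕ → ℕ∞) ∈ Qset →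
      Φ x = {A : ↥Fr | (A : PN) (lastFin (x : ℕ → ℕ∞)) = false} := by
    intro x hx
    have hnB : (x : ℕ → ℕ∞) ∉ Bt := by
      intro hmem
      obtain ⟨f, _, hf⟩ := hmem
      exact toInc_not_mem_Qset f (hf ▸ hx)
    simp only [hΦ, if_neg hnB]
  have hΦB : ∀ x : ↥X, (x : ℕ → ℕ∞) ∈ Bt → Φ x = Set.univ := by
    intro x hx
    simp only [hΦ, if_pos hx]
  -- the "false at p" sets are open & the key sets
  have hopenV0 : ∀ N : ℕ, IsOpen {A : ↥Fr | (A : PN) N = false} := by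
    intro N
    have hc : Continuous (fun A : ↥Fr => (A : PN) N) :=
      (continuous_apply N).comp continuous_subtype_val
    exact (isOpen_discrete {false}).preimage hc
  refine ⟨part1, Φ, ?_, ?_, hΦB, ?_⟩
  · -- LSC
    intro V hV
    rw [isOpen_iff_forall_mem_open]
    rintro x₀ ⟨A₀, hA₀Φ, hA₀V⟩
    obtain ⟨W, hWopen, hWpre⟩ := isOpen_induced_iff.mp hV
    have hA₀W : (A₀ : PN) ∈ W := by rw [← hWpre] at hA₀V; exact hA₀V
    obtain ⟨c, hc⟩ := flip_lemma hWopen A₀.2 hA₀W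
    -- the two generic membership facts
    have hmemB : ∀ y : ↥X, (y : ℕ → ℕ∞) ∈ Bt → (Φ y ∩ V).Nonempty := by
      intro y hy
      exact ⟨A₀, by rw [hΦB y hy]; trivial, hA₀V⟩
    have hmemQ : ∀ y : ↥X, (y : ℕ → ℕ∞) ∈ Qset → c ≤ lastFin (y : ℕ → ℕ∞) →
        (Φ y ∩ V).Nonempty := by
      intro y hy hcle
      obtain ⟨A, hAFr, hAW, hAfalse⟩ := hc _ hcle
      refine ⟨⟨A, hAFr⟩, ?_, ?_⟩
      · rw [hΦQ y hy]; exact hAfalse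
      · rw [← hWpre]; exact hAW
    rcases hXmem x₀ with hB | hQ
    · -- x₀ ∈ B
      obtain ⟨f, hfr, hf⟩ := hB
      obtain ⟨α, rfl⟩ := hfr
      set t : Set ↥X := {y : ↥X | ∀ n, n < c + 1 → (y : ℕ → ℕ∞) n = (x₀ : ℕ → ℕ∞) n} with htdef
      refine ⟨t, ?_, ?_, ?_⟩
      · -- t ⊆ the lsc set
        intro y hy
        rcases hXmem y with hyB | hyQ
        · exact hmemB y hyB
        · apply hmemQ y hyQ
          have hyc : (y : ℕ → ℕ∞) c = ((b α c : ℕ) : ℕ∞) := by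
            rw [hy c (by omega), ← hf]
            rfl
          have := lastFin_ge hyQ hyc
          have hcb : c ≤ b α c := (hb.strictMono α).le_apply
          omega
      · -- t open
        have : t = Subtype.val ⁻¹'
            (⋂ n ∈ Finset.range (c + 1), (fun z : ℕ → ℕ∞ => z n) ⁻¹' {(x₀ : ℕ → ℕ∞) n}) := by
          ext y
          simp [htdef, Finset.mem_range]
        rw [this]
        apply IsOpen.preimage continuous_subtype_val
        apply isOpen_biInter_finset
        intro n _
        apply IsOpen.preimage (continuous_apply n)
        apply ENat.isOpen_singleton
        rw [← hf]
        exact ENat.coe_ne_top _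
      · -- x₀ ∈ t
        intro n _
        rfl
    · -- x₀ ∈ Q
      have hex : ∃ j, (x₀ : ℕ → ℕ∞) j = ⊤ := hQ.2.exists
      set k₀ := Nat.find hex with hk₀
      set t : Set ↥X := {y : ↥X | (∀ n, n < k₀ → (y : ℕ → ℕ∞) n = (x₀ : ℕ → ℕ∞) n) ∧
        (c : ℕ∞) < (y : ℕ → ℕ∞) k₀} with htdef
      have hA₀false : (A₀ : PN) (lastFin (x₀ : ℕ → ℕ∞)) = false := by
        rw [hΦQ x₀ hQ] at hA₀Φ
        exact hA₀Φ
      refine ⟨t, ?_, ?_, ?_⟩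
      · -- t ⊆ the lsc set
        rintro y ⟨hypre, hytop⟩
        rcases hXmem y with hyB | hyQ
        · exact hmemB y hyB
        · by_cases hyk : (y : ℕ → ℕ∞) k₀ = ⊤
          · -- same lastFin as x₀
            have hyex : ∃ j, (y : ℕ → ℕ∞) j = ⊤ := ⟨k₀, hyk⟩
            have hyfind : Nat.find hyex = k₀ := by
              rw [Nat.find_eq_iff]
              refine ⟨hyk, fun j hj => ?_⟩
              rw [hypre j hj]
              exact Nat.find_min hex hj
            have hsame : (y : ℕ → ℕ∞) (k₀ - 1) = (x₀ : ℕ → ℕ∞) (k₀ - 1) := by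
              rcases Nat.eq_zero_or_pos k₀ with h0 | hpos
              · rw [h0]
                simp only [Nat.zero_sub]
                rw [show (y : ℕ → ℕ∞) 0 = ⊤ from h0 ▸ hyk,
                  show (x₀ : ℕ → ℕ∞) 0 = ⊤ from h0 ▸ Nat.find_spec hex]
              · exact hypre (k₀ - 1) (by omega)
            have hlf : lastFin (y : ℕ → ℕ∞) = lastFin (x₀ : ℕ → ℕ∞) := by
              rw [lastFin, dif_pos hyex, hyfind, lastFin, dif_pos hex, ← hk₀, hsame]
            refine ⟨A₀, ?_, hA₀V⟩
            rw [hΦQ y hyQ]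
            show (A₀ : PN) (lastFin (y : ℕ → ℕ∞)) = false
            rw [hlf]
            exact hA₀false
          · -- strictly bigger lastFin
            apply hmemQ y hyQ
            lift (y : ℕ → ℕ∞) k₀ to ℕ using hyk with mm hmm
            have hcmm : c < mm := by exact_mod_cast hytop
            have := lastFin_ge hyQ hmm.symm
            omega
      · -- t open
        have : t = Subtype.val ⁻¹'
            ((⋂ n ∈ Finset.range k₀, (fun z : ℕ → ℕ∞ => z n) ⁻¹' {(x₀ : ℕ → ℕ∞) n}) ∩
              ((fun z : ℕ → ℕ∞ => z k₀) ⁻¹' Set.Ioi (c : ℕ∞))) := by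
          ext y
          simp [htdef, Finset.mem_range]
        rw [this]
        apply IsOpen.preimage continuous_subtype_val
        apply IsOpen.inter
        · apply isOpen_biInter_finset
          intro n hn
          apply IsOpen.preimage (continuous_apply n)
          apply ENat.isOpen_singleton
          exact Nat.find_min hex (Finset.mem_range.mp hn)
        · exact IsOpen.preimage (continuous_apply k₀) isOpen_Ioi
      · -- x₀ ∈ t
        refine ⟨fun n _ => rfl, ?_⟩
        rw [Nat.find_spec hex]
        exact WithTop.coe_lt_top c
  · -- clopen and nonempty
    intro x
    by_cases hB : (x : ℕ → ℕ∞) ∈ Bt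
    · rw [hΦB x hB]
      exact ⟨isClopen_univ, ⟨⟨fun _ => true, by simp [Fr]⟩, trivial⟩⟩
    · have hQ : (x : ℕ → ℕ∞) ∈ Qset := (hXmem x).resolve_left hB
      rw [hΦQ x hQ]
      set N := lastFin (x : ℕ → ℕ∞)
      constructor
      · constructor
        · have hc : Continuous (fun A : ↥Fr => (A : PN) N) :=
            (continuous_apply N).comp continuous_subtype_val
          exact (isClosed_discrete {false}).preimage hc
        · exact hopenV0 N
      · refine ⟨⟨fun n => decide (n ≠ N), ?_⟩, ?_⟩
        · have : {n : ℕ | decide (n ≠ N) = false} ⊆ {N} := by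
            intro n hn
            simp only [Set.mem_setOf_eq, decide_eq_false_iff_not, not_not] at hn
            exact hn
          exact Set.Finite.subset (Set.finite_singleton N) this
        · show decide (N ≠ N) = false
          simp
  · -- main part: no large continuous selections
    intro Y hY φ hφcont hφsel
    rw [part1]
    by_contra hge
    push_neg at hge
    have hge' : bCard ≤ Cardinal.mk ↥Y := part1 ▸ hge
    -- the points of X coming from the scale
    have hXB : ∀ α, toInc (b α) ∈ X := by
      intro α
      rw [hX]
      exact Or.inl ⟨b α, ⟨α, rfl⟩, rfl⟩
    set xpt : {o : Ordinal // o < bCard.ord} → ↥X := fun α => ⟨toInc (b α), hXB α⟩ with hxpt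
    -- Step 1: traps from continuity at points of Q
    have htrap : ∀ (k : ℕ) (v : Fin k → ℕ), ∃ r L : ℕ, ∀ _ : qv k v ∈ Qset,
        ∀ y : ↥Y, (∀ n, n < k → (y : ↥X).1 n = qv k v n) →
        (∀ n, k ≤ n → n < L → (r : ℕ∞) < (y : ↥X).1 n) →
        ((φ y : ↥Fr) : PN) (lastFin (qv k v)) = false := by
      intro k v
      by_cases hq : qv k v ∈ Qset
      swap
      · exact ⟨0, 0, fun h => absurd h hq⟩
      have hqX : qv k v ∈ X := by rw [hX]; exact Or.inr hq
      set y0 : ↥Y := ⟨⟨qv k v, hqX⟩, hY ⟨qv k v, hqX⟩ hq⟩ with hy0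
      have hfalse : ((φ y0 : ↥Fr) : PN) (lastFin (qv k v)) = false := by
        have := hφsel y0
        rw [hΦQ (y0 : ↥X) hq] at this
        exact this
      set V0 : Set ↥Fr := {A : ↥Fr | (A : PN) (lastFin (qv k v)) = false} with hV0
      have hmemnhds : φ ⁻¹' V0 ∈ 𝓝 y0 :=
        hφcont.continuousAt ((hopenV0 _).mem_nhds hfalse)
      rw [nhds_induced, Filter.mem_comap] at hmemnhds
      obtain ⟨t1, ht1, hsub1⟩ := hmemnhds
      rw [nhds_induced, Filter.mem_comap] at ht1
      obtain ⟨t, ht, hsub⟩ := ht1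
      have htop : ∀ n, k ≤ n → qv k v n = ⊤ := by
        intro n hn
        simp [qv, Nat.not_lt.mpr hn]
      obtain ⟨r, L, hrL⟩ := nhds_extraction htop ht
      refine ⟨r, L, fun _ y hpre htail => ?_⟩
      have hz : (y : ↥X).1 ∈ t := hrL _ hpre htail
      have : (y : ↥X) ∈ t1 := hsub hz
      exact hsub1 this
    choose R L hRL using htrap
    -- Step 2: each scale point in Y is eventually true
    have hm : ∀ α, ∃ m : ℕ, ∀ h : xpt α ∈ Y, ∀ p, m ≤ p →
        ((φ ⟨xpt α, h⟩ : ↥Fr) : PN) p = true := by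
      intro α
      by_cases h : xpt α ∈ Y
      · obtain ⟨m, hm⟩ := Fr_tail (φ ⟨xpt α, h⟩).2
        exact ⟨m, fun _ => hm⟩
      · exact ⟨0, fun h' => absurd h' h⟩
    choose m hmspec using hm
    -- Step 3: the key inequality
    have hstar : ∀ α, ∀ _ : xpt α ∈ Y, ∀ k, m α < k →
        b α k ≤ R k (fun i : Fin k => b α i.1) := by
      intro α h k hk
      set v : Fin k → ℕ := fun i => b α i.1 with hv
      have hq : qv k v ∈ Qset := qv_mem_Qset (fun i j hij =>
        (hb.strictMono α).monotone hij)
      by_contra hgt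
      push_neg at hgt
      have hconc := hRL k v hq ⟨xpt α, h⟩
        (fun n hn => by simp [hxpt, toInc, qv, hn, hv])
        (fun n hn _ => by
          have h1 : R k v < b α n := lt_of_lt_of_le hgt ((hb.strictMono α).monotone hn)
          show (R k v : ℕ∞) < (b α n : ℕ∞)
          exact_mod_cast h1)
      have hk0 : 0 < k := by omega
      rw [lastFin_qv hk0 v] at hconc
      have hbk : b α (k - 1) = v ⟨k - 1, Nat.sub_lt hk0 one_pos⟩ := rfl
      have htrue : ((φ ⟨xpt α, h⟩ : ↥Fr) : PN) (v ⟨k - 1, Nat.sub_lt hk0 one_pos⟩) = true := by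
        apply hmspec α h
        have h1 : k - 1 ≤ b α (k - 1) := (hb.strictMono α).le_apply
        have h2 : m α ≤ k - 1 := by omega
        rw [← hbk]
        omega
      rw [htrue] at hconc
      simp at hconc
    -- Step 4: recursive bounding functions
    have hgdef : ∀ (mv : ℕ) (w : Fin (mv + 1) → ℕ), ∃ hg : ℕ → ℕ,
        hg 0 = Finset.sup Finset.univ w ∧ ∀ j, hg (j + 1) = max (hg j)
          (Finset.sup (Fintype.piFinset (fun _ : Fin (j + 1) => Finset.range (hg j + 1)))
            (R (j + 1))) := by
      intro mv w
      refine ⟨Nat.rec (Finset.sup Finset.univ w) (fun j ih => max ih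
        (Finset.sup (Fintype.piFinset (fun _ : Fin (j + 1) => Finset.range (ih + 1)))
          (R (j + 1)))), rfl, fun j => rfl⟩
    choose hg hg0 hgsucc using hgdef
    have hgmono : ∀ mv w, Monotone (hg mv w) := by
      intro mv w
      apply monotone_nat_of_le_succ
      intro j
      rw [hgsucc]
      exact le_max_left _ _
    -- Step 5: each b α (for α with xpt α ∈ Y) is bounded by hg
    have hbound : ∀ α, ∀ _ : xpt α ∈ Y, ∀ j,
        b α j ≤ hg (m α) (fun i : Fin (m α + 1) => b α i.1) j := by
      intro α h j
      induction j with
      | zero =>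
        rw [hg0]
        exact Finset.le_sup (f := fun i : Fin (m α + 1) => b α i.1)
          (Finset.mem_univ ⟨0, by omega⟩)
      | succ j ih =>
        by_cases hj : j + 1 ≤ m α
        · calc b α (j + 1) = (fun i : Fin (m α + 1) => b α i.1) ⟨j + 1, by omega⟩ := rfl
          _ ≤ hg (m α) (fun i : Fin (m α + 1) => b α i.1) 0 := by
              rw [hg0]
              exact Finset.le_sup (f := fun i : Fin (m α + 1) => b α i.1) (Finset.mem_univ _)
          _ ≤ hg (m α) (fun i : Fin (m α + 1) => b α i.1) (j + 1) :=
              hgmono _ _ (by omega)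
        · push_neg at hj
          have hks := hstar α h (j + 1) hj
          have hmem : (fun i : Fin (j + 1) => b α i.1) ∈
              Fintype.piFinset (fun _ : Fin (j + 1) =>
                Finset.range (hg (m α) (fun i : Fin (m α + 1) => b α i.1) j + 1)) := by
            rw [Fintype.mem_piFinset]
            intro i
            rw [Finset.mem_range]
            have h1 : b α i.1 ≤ b α j := (hb.strictMono α).monotone (by omega)
            omega
          calc b α (j + 1) ≤ R (j + 1) (fun i : Fin (j + 1) => b α i.1) := hks
          _ ≤ Finset.sup (Fintype.piFinset (fun _ : Fin (j + 1) =>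
                Finset.range (hg (m α) (fun i : Fin (m α + 1) => b α i.1) j + 1)))
              (R (j + 1)) := Finset.le_sup hmem
          _ ≤ hg (m α) (fun i : Fin (m α + 1) => b α i.1) (j + 1) := by
              rw [hgsucc]
              exact le_max_right _ _
    -- Step 6: a single dominating function
    set g : ℕ → ℕ := fun n => Finset.sup (Finset.range (n + 1)) (fun mv =>
      Finset.sup (Fintype.piFinset (fun _ : Fin (mv + 1) => Finset.range (n + 1)))
        (fun w => hg mv w n)) with hgdef2
    have hdom : ∀ α, ∀ _ : xpt α ∈ Y, ∀ᶠ n in atTop, b α n ≤ g n := by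
      intro α h
      filter_upwards [eventually_ge_atTop (max (m α) (b α (m α)) + 1)] with n hn
      have h1 : b α n ≤ hg (m α) (fun i : Fin (m α + 1) => b α i.1) n := hbound α h n
      have hmemw : (fun i : Fin (m α + 1) => b α i.1) ∈
          Fintype.piFinset (fun _ : Fin (m α + 1) => Finset.range (n + 1)) := by
        rw [Fintype.mem_piFinset]
        intro i
        rw [Finset.mem_range]
        have : b α i.1 ≤ b α (m α) := (hb.strictMono α).monotone (by omega)
        omega
      calc b α n ≤ hg (m α) (fun i : Fin (m α + 1) => b α i.1) n := h1
      _ ≤ Finset.sup (Fintype.piFinset (fun _ : Fin (m α + 1) => Finset.range (n + 1)))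
            (fun w => hg (m α) w n) := Finset.le_sup (f := fun w => hg (m α) w n) hmemw
      _ ≤ g n := Finset.le_sup (f := fun mv =>
            Finset.sup (Fintype.piFinset (fun _ : Fin (mv + 1) => Finset.range (n + 1)))
              (fun w => hg mv w n)) (Finset.mem_range.mpr (by omega))
    -- Step 7: cofinality of S = {α | xpt α ∈ Y}
    have hcof : ∀ γ : {o : Ordinal // o < bCard.ord}, ∃ α, xpt α ∈ Y ∧ γ ≤ α := by
      intro γ
      by_contra hnot
      push_neg at hnot
      have hnot' : ∀ α, xpt α ∈ Y → α < γ := hnot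
      -- then Y injects into Iio γ ⊕ Qset, so |Y| < bCard
      have hsmall : Cardinal.mk ↥Y < bCard := by
        have hex2 : ∀ y : ↥Y, ((y : ↥X) : ℕ → ℕ∞) ∉ Qset →
            ∃ α, toInc (b α) = ((y : ↥X) : ℕ → ℕ∞) := by
          intro y h
          rcases (hXmem (y : ↥X)).resolve_right h with ⟨f, ⟨α, hα⟩, hf⟩
          exact ⟨α, by rw [hα]; exact hf⟩
        set pick : ↥Y → {o : Ordinal // o < bCard.ord} := fun y =>
          if h : ∃ α, toInc (b α) = ((y : ↥X) : ℕ → ℕ∞) then h.choose else γ with hpickdef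
        have hpick : ∀ y : ↥Y, ((y : ↥X) : ℕ → ℕ∞) ∉ Qset →
            toInc (b (pick y)) = ((y : ↥X) : ℕ → ℕ∞) ∧ pick y < γ := by
          intro y h
          have he := hex2 y h
          have h1 : toInc (b (pick y)) = ((y : ↥X) : ℕ → ℕ∞) := by
            rw [hpickdef]
            simp only [dif_pos he]
            exact he.choose_spec
          refine ⟨h1, ?_⟩
          have hxy : xpt (pick y) = (y : ↥X) := Subtype.ext h1
          have hmem : xpt (pick y) ∈ Y := by rw [hxy]; exact y.2
          exact hnot' _ hmem
        set F : ↥Y → (↥(Set.Iio (γ : Ordinal)) ⊕ ULift.{1} ↥Qset) := fun y =>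
          if h : ((y : ↥X) : ℕ → ℕ∞) ∈ Qset then Sum.inr ⟨⟨_, h⟩⟩
          else Sum.inl ⟨(pick y).1, Subtype.coe_lt_coe.mpr (hpick y h).2⟩ with hF
        have hFinj : Function.Injective F := by
          intro y y' hyy
          rw [hF] at hyy
          by_cases h1 : ((y : ↥X) : ℕ → ℕ∞) ∈ Qset <;>
            by_cases h2 : ((y' : ↥X) : ℕ → ℕ∞) ∈ Qset
          · simp only [dif_pos h1, dif_pos h2] at hyy
            have := congrArg (fun s => match s with
              | Sum.inr z => z.down.1
              | Sum.inl _ => (fun _ => ⊤ : ℕ → ℕ∞)) hyy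
            simp only at this
            exact Subtype.ext (Subtype.ext this)
          · simp only [dif_pos h1, dif_neg h2] at hyy
            exact absurd hyy (by simp)
          · simp only [dif_neg h1, dif_pos h2] at hyy
            exact absurd hyy (by simp)
          · simp only [dif_neg h1, dif_neg h2] at hyy
            have hval : (pick y).1 = (pick y').1 := by
              have := congrArg (fun s => match s with
                | Sum.inl z => z.1
                | Sum.inr _ => (0 : Ordinal)) hyy
              simpa using this
            have heqα : pick y = pick y' := Subtype.ext hval
            apply Subtype.ext
            apply Subtype.ext
            rw [← (hpick y h1).1, ← (hpick y' h2).1, heqα]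
        have hcard := Cardinal.lift_mk_le_lift_mk_of_injective hFinj
        have hsum : Cardinal.mk (↥(Set.Iio (γ : Ordinal)) ⊕ ULift.{1} ↥Qset) =
            Cardinal.lift.{1} (γ : Ordinal).card + Cardinal.lift.{1} (Cardinal.mk ↥Qset) := by
          rw [Cardinal.mk_sum]
          congr 1
          · rw [Ordinal.mk_Iio_ordinal]
            simp [Cardinal.lift_lift]
          · rw [Cardinal.mk_uLift]
            simp
        rw [hsum, Cardinal.lift_uzero] at hcard
        have hlt1 : (γ : Ordinal).card < bCard := Cardinal.lt_ord.mp γ.2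
        have hlt2 : Cardinal.mk ↥Qset < bCard :=
          lt_of_le_of_lt (@Cardinal.mk_le_aleph0 _ countable_Qset) aleph0_lt_bCard
        have hlt : Cardinal.lift.{1} (γ : Ordinal).card + Cardinal.lift.{1} (Cardinal.mk ↥Qset) <
            Cardinal.lift.{1} bCard := by
          rw [← Cardinal.lift_add, Cardinal.lift_lt]
          exact Cardinal.add_lt_of_lt (le_of_lt aleph0_lt_bCard) hlt1 hlt2
        have := lt_of_le_of_lt hcard hlt
        rwa [Cardinal.lift_lt] at this
      exact absurd hge' (not_le.mpr hsmall)
    -- Step 8: contradiction with unboundedness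
    have hall : ∀ β, ∀ᶠ n in atTop, b β n ≤ g n := by
      intro β
      obtain ⟨α, hαY, hβα⟩ := hcof β
      rcases eq_or_lt_of_le hβα with rfl | hlt
      · exact hdom β hαY
      · filter_upwards [hb.mono β α hlt, hdom α hαY] with n h1 h2
        omega
    obtain ⟨β, hβ⟩ := hb.unbounded g
    exact hβ (hall β)
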